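/- arXiv:2405.17174 — 2 statements merged into one kernel-verified Lean document; each statement's English description precedes it below -/
import Mathlib

section
/- Let μ be a dominant integral coweight and let w ∈ W₀ be a minimal coset representative for μ. Then for every positive root α ∈ Φ⁺ and every point v of the fundamental alcove A one has ⟨α, μ⟩ + ⟨w(α), v⟩ > 0; equivalently, for every α ∈ Φ⁺, either ⟨α, μ⟩ ≥ 1, or ⟨α, μ⟩ = 0 and w(α) ∈ Φ⁺. (This expresses that the affine transformation t_{−w(μ)}w is the minimal-length element of its coset t_{−w(μ)}W₀ in the extended affine Weyl group.) -/
/-!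
Common framework: a finite crystallographic reduced root system `Φ` inside the dual
of a finite-dimensional real vector space `V`, with a choice of positive roots `Pos`,
simple roots `Delta`, coroots, and the finite Weyl group `W` (a subgroup of linear
automorphisms of `V` generated by the root reflections).  We also set up affine
hyperplanes, the fundamental alcove, separation counts, and alcove walks.
-/

open Module Finset

section BasicDefs

variable {V : Type*} [AddCommGroup V] [Module ℝ V]

/-- The affine transformation `t_ν u : v ↦ u(v) + ν`. -/
def affT (ν : V) (u : V ≃ₗ[ℝ] V) : V → V := fun v => u v + ν

/-- The affine hyperplane `H_{α,n} = {v : ⟨α, v⟩ = n}`. -/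
def affHyp (α : Dual ℝ V) (n : ℤ) : Set V := {v | α v = (n : ℝ)}

/-- `H_{α,n}` separates `S` and `T`: the affine functional `⟨α, ·⟩ - n` is strictly
positive everywhere on one of the two sets and strictly negative everywhere on the other. -/
def SepBy (α : Dual ℝ V) (n : ℤ) (S T : Set V) : Prop :=
  ((∀ v ∈ S, α v < (n : ℝ)) ∧ ∀ v ∈ T, (n : ℝ) < α v) ∨
  ((∀ v ∈ S, (n : ℝ) < α v) ∧ ∀ v ∈ T, α v < (n : ℝ))

/-- The contragredient action of `w` on `V*`:  `(w · α)(v) = α (w⁻¹ v)`. -/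
def dAct (w : V ≃ₗ[ℝ] V) (α : Dual ℝ V) : Dual ℝ V := α.comp w.symm.toLinearMap

end BasicDefs

/-- A finite crystallographic reduced root system spanning the dual of `V`, together
with a system of positive roots, the simple roots, the coroots and the Weyl group. -/
structure RootSystemCtx (V : Type*) [AddCommGroup V] [Module ℝ V]
    [FiniteDimensional ℝ V] where
  Φ : Finset (Dual ℝ V)
  Pos : Finset (Dual ℝ V)
  Delta : Finset (Dual ℝ V)
  coroot : Dual ℝ V → V
  W : Subgroup (V ≃ₗ[ℝ] V)
  pos_subset : Pos ⊆ Φ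
  delta_subset : Delta ⊆ Pos
  root_ne_zero : ∀ α ∈ Φ, α ≠ 0
  span_eq_top : Submodule.span ℝ (Φ : Set (Dual ℝ V)) = ⊤
  pos_partition : ∀ α ∈ Φ, (α ∈ Pos ∧ -α ∉ Pos) ∨ (-α ∈ Pos ∧ α ∉ Pos)
  coroot_self : ∀ α ∈ Φ, α (coroot α) = 2
  crystallographic : ∀ α ∈ Φ, ∀ β ∈ Φ, ∃ n : ℤ, β (coroot α) = (n : ℝ)
  reduced : ∀ α ∈ Φ, ∀ c : ℝ, c • α ∈ Φ → c = 1 ∨ c = -1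
  root_reflect_mem : ∀ α ∈ Φ, ∀ β ∈ Φ, β - β (coroot α) • α ∈ Φ
  delta_indep : LinearIndependent ℝ (fun x : {a : Dual ℝ V // a ∈ Delta} => x.1)
  pos_of_delta : ∀ α ∈ Pos, ∃ c : Dual ℝ V → ℕ, α = ∑ β ∈ Delta, (c β : ℝ) • β
  W_gen : W = Subgroup.closure
    {g : V ≃ₗ[ℝ] V | ∃ α ∈ Φ, ∀ v : V, g v = v - α v • coroot α}

namespace RootSystemCtx

variable {V : Type*} [AddCommGroup V] [Module ℝ V] [FiniteDimensional ℝ V]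

section CtxDefs

variable (C : RootSystemCtx V)

/-- `ρ`, the half sum of the positive roots. -/
noncomputable def rho : Dual ℝ V := (2⁻¹ : ℝ) • ∑ α ∈ C.Pos, α

open Classical in
/-- The inversion set `{α ∈ Φ⁺ : w(α) ∈ -Φ⁺}` of `w`. -/
noncomputable def invSet (w : V ≃ₗ[ℝ] V) : Finset (Dual ℝ V) :=
  C.Pos.filter fun α => -(dAct w α) ∈ C.Pos

/-- The length `ℓ(w) = #{α ∈ Φ⁺ : w(α) ∈ -Φ⁺}`. -/
noncomputable def len (w : V ≃ₗ[ℝ] V) : ℕ := (C.invSet w).card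

/-- `lam` is an integral coweight: `⟨α, lam⟩ ∈ ℤ` for all roots `α`. -/
def IsIntegral (lam : V) : Prop := ∀ α ∈ C.Φ, ∃ n : ℤ, α lam = (n : ℝ)

/-- `lam` is dominant: `⟨α, lam⟩ ≥ 0` for all positive roots `α`. -/
def IsDominant (lam : V) : Prop := ∀ α ∈ C.Pos, 0 ≤ α lam

/-- `w` is a minimal(-length) coset representative for `lam`, i.e. `w ∈ W₀` and
`ℓ(w) ≤ ℓ(v)` for every `v ∈ w W_{0,lam}`. -/
def IsMinRep (w : V ≃ₗ[ℝ] V) (lam : V) : Prop :=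
  w ∈ C.W ∧ ∀ u ∈ C.W, u lam = lam → C.len w ≤ C.len (w * u)

/-- The (open) fundamental alcove `A`. -/
def alcove : Set V := {v | ∀ α ∈ C.Pos, 0 < α v ∧ α v < 1}

/-- The closure of the fundamental alcove. -/
def closedAlcove : Set V := {v | ∀ α ∈ C.Pos, 0 ≤ α v ∧ α v ≤ 1}

/-- The open dominant Weyl chamber `C`. -/
def chamber : Set V := {v | ∀ α ∈ C.Pos, 0 < α v}

/-- The number of affine hyperplanes `H_{α,n}` (`α ∈ Φ⁺`, `n ∈ ℤ`) separating `S` and `T`. -/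
noncomputable def sepCount (S T : Set V) : ℕ :=
  Set.ncard {p : Dual ℝ V × ℤ | p.1 ∈ C.Pos ∧ SepBy p.1 p.2 S T}

/-- The length of an affine transformation: the number of affine hyperplanes
separating `A` and `f(A)`. -/
noncomputable def affLen (f : V → V) : ℕ := C.sepCount C.alcove (f '' C.alcove)

/-- The coroot lattice `Q^∨`. -/
def Qv : AddSubgroup V := AddSubgroup.closure (C.coroot '' (C.Φ : Set (Dual ℝ V)))

/-- `b` is an alcove: a transform of the fundamental alcove under the affine Weyl
group `Q^∨ ⋊ W₀`. -/
def IsAlcoveSet (b : Set V) : Prop := ∃ ν ∈ C.Qv, ∃ u ∈ C.W, b = affT ν u '' C.alcove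

/-- The affine reflection through the hyperplane `H_{α,n}`. -/
def reflH (α : Dual ℝ V) (n : ℤ) : V → V := fun v => v - (α v - (n : ℝ)) • C.coroot α

/-- `H_{α,n}` (with `α ∈ Φ⁺`) supports a codimension-one face of the alcove `b`:
it is the unique affine hyperplane separating `b` from its reflection through `H_{α,n}`. -/
def IsWall (α : Dual ℝ V) (n : ℤ) (b : Set V) : Prop :=
  α ∈ C.Pos ∧ SepBy α n b (C.reflH α n '' b) ∧
    ∀ β ∈ C.Pos, ∀ m : ℤ, SepBy β m b (C.reflH α n '' b) → β = α ∧ m = n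

open Classical in
/-- `Φ_M = Φ ∩ ℤΔ_M`, the roots of the Levi attached to `Δ_M ⊆ Δ`. -/
noncomputable def PhiM (ΔM : Finset (Dual ℝ V)) : Finset (Dual ℝ V) :=
  C.Φ.filter fun α => α ∈ Submodule.span ℤ (ΔM : Set (Dual ℝ V))

/-- `W_{0,M}`, the subgroup of `W₀` generated by the reflections in the roots of `Φ_M`. -/
def WM (ΔM : Finset (Dual ℝ V)) : Subgroup (V ≃ₗ[ℝ] V) :=
  Subgroup.closure {g : V ≃ₗ[ℝ] V | ∃ α ∈ C.PhiM ΔM, ∀ v : V, g v = v - α v • C.coroot α}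

/-- `lam` is `M`-dominant: `⟨β, lam⟩ ≥ 0` for every `β ∈ Φ_M⁺ = Φ_M ∩ Φ⁺`. -/
def IsMDominant (ΔM : Finset (Dual ℝ V)) (lam : V) : Prop :=
  ∀ β, β ∈ C.PhiM ΔM → β ∈ C.Pos → 0 ≤ β lam

end CtxDefs

/-- An alcove walk of length `len`, starting at the fundamental alcove: at each step
`i < len` we are given a wall `H_{root i, lev i}` of the alcove `alc i`, and
`alc (i+1)` is either `alc i` (a folding) or its reflection through that wall (a crossing). -/
structure Walk (C : RootSystemCtx V) where
  len : ℕ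
  alc : ℕ → Set V
  root : ℕ → Dual ℝ V
  lev : ℕ → ℤ
  start : alc 0 = C.alcove
  isAlcove : ∀ i ≤ len, C.IsAlcoveSet (alc i)
  wall : ∀ i < len, C.IsWall (root i) (lev i) (alc i)
  step : ∀ i < len, alc (i + 1) = alc i ∨ alc (i + 1) = C.reflH (root i) (lev i) '' alc i

namespace Walk

variable {C : RootSystemCtx V}

/-- Step `i` is a folding. -/
def IsFolding (Wk : Walk C) (i : ℕ) : Prop := Wk.alc (i + 1) = Wk.alc i

/-- Step `i` is a crossing. -/
def IsCrossing (Wk : Walk C) (i : ℕ) : Prop := Wk.alc (i + 1) ≠ Wk.alc i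

/-- The affine functional of step `i` is positive on the current alcove
(positivity for the dominant orientation). -/
def PosAt (Wk : Walk C) (i : ℕ) : Prop := ∀ v ∈ Wk.alc i, (Wk.lev i : ℝ) < Wk.root i v

/-- The affine functional of step `i` is negative on the current alcove. -/
def NegAt (Wk : Walk C) (i : ℕ) : Prop := ∀ v ∈ Wk.alc i, Wk.root i v < (Wk.lev i : ℝ)

open Classical in
/-- `c⁺`: the number of crossings positive for the dominant orientation. -/
noncomputable def cPlus (Wk : Walk C) : ℕ :=
  ((Finset.range Wk.len).filter fun i => Wk.IsCrossing i ∧ Wk.PosAt i).card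

open Classical in
/-- `f⁺`: the number of foldings. -/
noncomputable def fPlus (Wk : Walk C) : ℕ :=
  ((Finset.range Wk.len).filter fun i => Wk.IsFolding i).card

/-- Positively folded for the dominant orientation. -/
def PosFolded (Wk : Walk C) : Prop := ∀ i < Wk.len, Wk.IsFolding i → Wk.NegAt i

/-- Positivity of step `i` for the parabolic orientation attached to the Levi root
set `ΦM`: for `α ∉ Φ_M` positivity on the current alcove; for `α ∈ Φ_M` the sign on
the current alcove agrees with the sign on the fundamental alcove. -/
def PosAtP (Wk : Walk C) (ΦM : Finset (Dual ℝ V)) (i : ℕ) : Prop :=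
  (Wk.root i ∉ ΦM ∧ Wk.PosAt i) ∨
  (Wk.root i ∈ ΦM ∧
    ((Wk.PosAt i ∧ ∀ v ∈ C.alcove, (Wk.lev i : ℝ) < Wk.root i v) ∨
     (Wk.NegAt i ∧ ∀ v ∈ C.alcove, Wk.root i v < (Wk.lev i : ℝ))))

/-- Negativity of step `i` for the parabolic orientation attached to `ΦM`. -/
def NegAtP (Wk : Walk C) (ΦM : Finset (Dual ℝ V)) (i : ℕ) : Prop :=
  (Wk.root i ∉ ΦM ∧ Wk.NegAt i) ∨
  (Wk.root i ∈ ΦM ∧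
    ((Wk.PosAt i ∧ ∀ v ∈ C.alcove, Wk.root i v < (Wk.lev i : ℝ)) ∨
     (Wk.NegAt i ∧ ∀ v ∈ C.alcove, (Wk.lev i : ℝ) < Wk.root i v)))

open Classical in
/-- `c⁺` for the parabolic orientation attached to `ΦM`. -/
noncomputable def cPlusP (Wk : Walk C) (ΦM : Finset (Dual ℝ V)) : ℕ :=
  ((Finset.range Wk.len).filter fun i => Wk.IsCrossing i ∧ Wk.PosAtP ΦM i).card

/-- Positively folded for the parabolic orientation attached to `ΦM`. -/
def PosFoldedP (Wk : Walk C) (ΦM : Finset (Dual ℝ V)) : Prop :=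
  ∀ i < Wk.len, Wk.IsFolding i → Wk.NegAtP ΦM i

/-- A minimal gallery from the fundamental alcove to `b`: all steps are crossings,
it ends at `b`, and its length is the number of hyperplanes separating `A` and `b`. -/
def IsMinGallery (Wk : Walk C) (b : Set V) : Prop :=
  (∀ i < Wk.len, Wk.IsCrossing i) ∧ Wk.alc Wk.len = b ∧
    Wk.len = C.sepCount C.alcove b

/-- Two walks have the same type: same length and, at each step, the pullbacks of the
crossed/folded hyperplanes to the fundamental alcove coincide. -/
def SameType (Wk G : Walk C) : Prop :=
  Wk.len = G.len ∧ ∀ i < Wk.len,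
    ∃ ν₁ ∈ C.Qv, ∃ u₁ ∈ C.W, ∃ ν₂ ∈ C.Qv, ∃ u₂ ∈ C.W,
      Wk.alc i = affT ν₁ u₁ '' C.alcove ∧ G.alc i = affT ν₂ u₂ '' C.alcove ∧
      affT ν₁ u₁ ⁻¹' affHyp (Wk.root i) (Wk.lev i) =
        affT ν₂ u₂ ⁻¹' affHyp (G.root i) (G.lev i)

/-- The walk terminates at `v₀`: `v₀` lies in the closure of the final alcove. -/
def Terminates (Wk : Walk C) (v₀ : V) : Prop :=
  ∃ ν ∈ C.Qv, ∃ u ∈ C.W, Wk.alc Wk.len = affT ν u '' C.alcove ∧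
    v₀ ∈ affT ν u '' C.closedAlcove

/-- Two walks are equal as walks: same length and identical sequences of alcoves,
roots and levels. -/
def Equiv (Wk Wk' : Walk C) : Prop :=
  Wk.len = Wk'.len ∧ (∀ i ≤ Wk.len, Wk.alc i = Wk'.alc i) ∧
    ∀ i < Wk.len, Wk.root i = Wk'.root i ∧ Wk.lev i = Wk'.lev i

end Walk

end RootSystemCtx


namespace RootSystemCtx

section AuxLemmas

variable {V : Type*} [AddCommGroup V] [Module ℝ V] [FiniteDimensional ℝ V]
variable (C : RootSystemCtx V)

lemma aux_pos_iff {β : Dual ℝ V} (hβ : β ∈ C.Φ) : β ∈ C.Pos ↔ -β ∉ C.Pos := by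
  rcases C.pos_partition β hβ with h | h
  · exact ⟨fun _ => h.2, fun _ => h.1⟩
  · exact ⟨fun hb => absurd hb h.2, fun _ => absurd h.1 (by assumption)⟩

lemma aux_delta_coeffs_zero (g : Dual ℝ V → ℝ)
    (h : ∑ δ ∈ C.Delta, g δ • δ = 0) : ∀ δ ∈ C.Delta, g δ = 0 := by
  classical
  have hli := C.delta_indep
  rw [Fintype.linearIndependent_iff] at hli
  intro δ hδ
  refine hli (fun x => g x.1) ?_ ⟨δ, hδ⟩
  rw [Finset.univ_eq_attach, Finset.sum_attach C.Delta (fun δ => g δ • δ)]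
  exact h

/-- If a nonnegative combination of three positive roots vanishes, the first term vanishes. -/
lemma aux_triple_zero {x y z : Dual ℝ V} (hx : x ∈ C.Pos) (hy : y ∈ C.Pos)
    (hz : z ∈ C.Pos) {a b d : ℝ} (ha : 0 ≤ a) (hb : 0 ≤ b) (hd : 0 ≤ d)
    (h : a • x + b • y + d • z = 0) : a • x = 0 := by
  classical
  obtain ⟨cx, hcx⟩ := C.pos_of_delta x hx
  obtain ⟨cy, hcy⟩ := C.pos_of_delta y hy
  obtain ⟨cz, hcz⟩ := C.pos_of_delta z hz
  have hsum : ∑ δ ∈ C.Delta, (a * (cx δ : ℝ) + b * (cy δ : ℝ) + d * (cz δ : ℝ)) • δ = 0 := by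
    rw [hcx, hcy, hcz] at h
    rw [Finset.smul_sum, Finset.smul_sum, Finset.smul_sum] at h
    rw [← Finset.sum_add_distrib, ← Finset.sum_add_distrib] at h
    rw [← h]
    refine Finset.sum_congr rfl fun δ _ => ?_
    rw [smul_smul, smul_smul, smul_smul, add_smul, add_smul]
  have hkey := C.aux_delta_coeffs_zero _ hsum
  rw [hcx, Finset.smul_sum]
  refine Finset.sum_eq_zero fun δ hδ => ?_
  have h0 := hkey δ hδ
  have h1 : 0 ≤ a * (cx δ : ℝ) := mul_nonneg ha (Nat.cast_nonneg _)
  have h2 : 0 ≤ b * (cy δ : ℝ) := mul_nonneg hb (Nat.cast_nonneg _)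
  have h3 : 0 ≤ d * (cz δ : ℝ) := mul_nonneg hd (Nat.cast_nonneg _)
  have hax : a * (cx δ : ℝ) = 0 := by linarith
  rw [smul_smul, hax, zero_smul]

lemma aux_sRefl_key (α : Dual ℝ V) (h2 : α (C.coroot α) = 2) (v : V) :
    v - α v • C.coroot α - α (v - α v • C.coroot α) • C.coroot α = v := by
  have hv : α (v - α v • C.coroot α) = - α v := by
    rw [map_sub, map_smul, h2, smul_eq_mul]; ring
  rw [hv]; module

/-- The reflection `s_α` as a linear automorphism. -/
noncomputable def sRefl (α : Dual ℝ V) (h2 : α (C.coroot α) = 2) : V ≃ₗ[ℝ] V :=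
  LinearEquiv.ofLinear (LinearMap.id - α.smulRight (C.coroot α))
    (LinearMap.id - α.smulRight (C.coroot α))
    (by
      ext v
      simp only [LinearMap.coe_comp, Function.comp_apply, LinearMap.sub_apply,
        LinearMap.id_coe, id_eq, LinearMap.smulRight_apply, LinearMap.id_apply]
      exact C.aux_sRefl_key α h2 v)
    (by
      ext v
      simp only [LinearMap.coe_comp, Function.comp_apply, LinearMap.sub_apply,
        LinearMap.id_coe, id_eq, LinearMap.smulRight_apply, LinearMap.id_apply]
      exact C.aux_sRefl_key α h2 v)

lemma sRefl_apply (α : Dual ℝ V) (h2 : α (C.coroot α) = 2) (v : V) :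
    C.sRefl α h2 v = v - α v • C.coroot α := rfl

lemma sRefl_symm_apply (α : Dual ℝ V) (h2 : α (C.coroot α) = 2) (v : V) :
    (C.sRefl α h2).symm v = v - α v • C.coroot α := rfl

lemma sRefl_mem_W {α : Dual ℝ V} (hα : α ∈ C.Φ) (h2 : α (C.coroot α) = 2) :
    C.sRefl α h2 ∈ C.W := by
  rw [C.W_gen]
  exact Subgroup.subset_closure ⟨α, hα, fun v => rfl⟩

lemma dAct_sRefl (α : Dual ℝ V) (h2 : α (C.coroot α) = 2) (β : Dual ℝ V) :
    dAct (C.sRefl α h2) β = β - β (C.coroot α) • α := by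
  ext v
  have : dAct (C.sRefl α h2) β v = β (v - α v • C.coroot α) := rfl
  rw [this, map_sub, map_smul]
  simp only [LinearMap.sub_apply, LinearMap.smul_apply, smul_eq_mul]
  ring

lemma sRefl_mul_self (α : Dual ℝ V) (h2 : α (C.coroot α) = 2) :
    C.sRefl α h2 * C.sRefl α h2 = 1 := by
  refine LinearEquiv.ext fun v => ?_
  show C.sRefl α h2 (C.sRefl α h2 v) = v
  rw [C.sRefl_apply, C.sRefl_apply]
  exact C.aux_sRefl_key α h2 v

lemma dAct_mem_Phi {w : V ≃ₗ[ℝ] V} (hw : w ∈ C.W) {β : Dual ℝ V} (hβ : β ∈ C.Φ) :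
    dAct w β ∈ C.Φ := by
  rw [C.W_gen] at hw
  have key : (∀ γ ∈ C.Φ, dAct w γ ∈ C.Φ) ∧ (∀ γ ∈ C.Φ, dAct w⁻¹ γ ∈ C.Φ) := by
    induction hw using Subgroup.closure_induction with
    | mem g hg =>
      obtain ⟨α, hα, hgv⟩ := hg
      have hinv : g⁻¹ = g := by
        refine inv_eq_of_mul_eq_one_right (LinearEquiv.ext fun v => ?_)
        show g (g v) = v
        have hαg : α (g v) = - α v := by
          rw [hgv v, map_sub, map_smul, C.coroot_self α hα, smul_eq_mul]; ring
        calc g (g v) = g v - α (g v) • C.coroot α := hgv _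
          _ = v := by rw [hαg, hgv v]; module
      have hsymm : g.symm = g := hinv
      have hd : ∀ γ ∈ C.Φ, dAct g γ ∈ C.Φ := by
        intro γ hγ
        have hgd : dAct g γ = γ - γ (C.coroot α) • α := by
          ext v
          have e1 : dAct g γ v = γ (g.symm v) := rfl
          rw [e1, hsymm, hgv v, map_sub, map_smul]
          simp only [LinearMap.sub_apply, LinearMap.smul_apply, smul_eq_mul]
          ring
        rw [hgd]
        exact C.root_reflect_mem α hα γ hγ
      exact ⟨hd, by rwa [hinv]⟩
    | one => exact ⟨fun γ hγ => hγ, fun γ hγ => by rw [inv_one]; exact hγ⟩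
    | mul x y hx hy ihx ihy =>
      refine ⟨fun γ hγ => ihx.1 _ (ihy.1 _ hγ), fun γ hγ => ?_⟩
      rw [mul_inv_rev]
      exact ihy.2 _ (ihx.2 _ hγ)
    | inv x hx ih => exact ⟨ih.2, by simpa using ih.1⟩
  exact key.1 β hβ

lemma mem_invSet {w : V ≃ₗ[ℝ] V} {β : Dual ℝ V} :
    β ∈ C.invSet w ↔ β ∈ C.Pos ∧ -(dAct w β) ∈ C.Pos := by
  classical
  simp [invSet]

/-- Key length inequality: if `w(α) < 0` for a positive root `α`, then `ℓ(w s_α) < ℓ(w)`. -/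
lemma len_mul_sRefl_lt {w : V ≃ₗ[ℝ] V} (hw : w ∈ C.W) {α : Dual ℝ V}
    (hα : α ∈ C.Pos) (h2 : α (C.coroot α) = 2) (hneg : -(dAct w α) ∈ C.Pos) :
    C.len (w * C.sRefl α h2) < C.len w := by
  classical
  have hαΦ : α ∈ C.Φ := C.pos_subset hα
  set s := C.sRefl α h2 with hs
  set σ : Dual ℝ V → Dual ℝ V := fun β => β - β (C.coroot α) • α with hσ
  have hdA : ∀ β, dAct s β = σ β := fun β => C.dAct_sRefl α h2 β
  have hσΦ : ∀ β ∈ C.Φ, σ β ∈ C.Φ := fun β hβ => C.root_reflect_mem α hαΦ β hβ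
  have hσσ : ∀ β, σ (σ β) = β := by
    intro β
    rw [← hdA, ← hdA]
    have e : dAct s (dAct s β) = dAct (s * s) β := rfl
    rw [e, C.sRefl_mul_self]
    rfl
  have hσneg : ∀ γ, σ (-γ) = -(σ γ) := by
    intro γ
    rw [← hdA, ← hdA]
    rfl
  have htri : ∀ δ ∈ C.Φ, (dAct w δ ∈ C.Pos ↔ -(dAct w δ) ∉ C.Pos) :=
    fun δ hδ => C.aux_pos_iff (C.dAct_mem_Phi hw hδ)
  have hwne : ∀ δ ∈ C.Φ, dAct w δ ≠ 0 :=
    fun δ hδ => C.root_ne_zero _ (C.dAct_mem_Phi hw hδ)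
  set Ψ : Finset (Dual ℝ V) := C.invSet s with hΨ
  have hΨmem : ∀ β, β ∈ Ψ ↔ β ∈ C.Pos ∧ -(σ β) ∈ C.Pos := by
    intro β; rw [hΨ, C.mem_invSet, hdA]
  have hsign : ∀ β ∈ C.Pos, β ∉ Ψ → σ β ∈ C.Pos := by
    intro β hβ hβΨ
    have hσβΦ : σ β ∈ C.Φ := hσΦ β (C.pos_subset hβ)
    rw [C.aux_pos_iff hσβΦ]
    intro hcon
    exact hβΨ ((hΨmem β).2 ⟨hβ, hcon⟩)
  have hsign' : ∀ β ∈ Ψ, σ β ∉ C.Pos := by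
    intro β hβ
    have h1 := ((hΨmem β).1 hβ).2
    have hσβΦ : σ β ∈ C.Φ := hσΦ β (C.pos_subset ((hΨmem β).1 hβ).1)
    rcases C.pos_partition _ hσβΦ with h | h
    · exact absurd h1 h.2
    · exact h.2
  have hcpos : ∀ β ∈ Ψ, 0 < β (C.coroot α) := by
    intro β hβ
    obtain ⟨hβP, hnσ⟩ := (hΨmem β).1 hβ
    by_contra hle
    push_neg at hle
    have h0 : (1:ℝ) • β + (-(β (C.coroot α))) • α + (1:ℝ) • (-(σ β)) = 0 := by
      simp only [hσ, one_smul, neg_smul]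
      module
    have hz := C.aux_triple_zero hβP hα hnσ (by norm_num) (by linarith) (by norm_num) h0
    rw [one_smul] at hz
    exact C.root_ne_zero β (C.pos_subset hβP) hz
  have hσα : σ α = -α := by
    simp only [hσ, h2]
    module
  have hαΨ : α ∈ Ψ := (hΨmem α).2 ⟨hα, by rw [hσα, neg_neg]; exact hα⟩
  have hαI : α ∈ C.invSet w := C.mem_invSet.2 ⟨hα, hneg⟩
  set φ : Dual ℝ V → Dual ℝ V := fun β => if σ β ∈ C.Pos then σ β else -(σ β) with hφ
  have hφval_mem : ∀ β ∈ Ψ, φ β = -(σ β) := by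
    intro β hβ; rw [hφ]; simp only [if_neg (hsign' β hβ)]
  have hφval_nmem : ∀ β ∈ C.Pos, β ∉ Ψ → φ β = σ β := by
    intro β hβ hβΨ; rw [hφ]; simp only [if_pos (hsign β hβ hβΨ)]
  have hφPos : ∀ β ∈ C.Pos, φ β ∈ C.Pos := by
    intro β hβ
    by_cases hβΨ : β ∈ Ψ
    · rw [hφval_mem β hβΨ]; exact ((hΨmem β).1 hβΨ).2
    · rw [hφval_nmem β hβ hβΨ]; exact hsign β hβ hβΨ
  have hφΨ : ∀ β ∈ Ψ, φ β ∈ Ψ := by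
    intro β hβ
    rw [hφval_mem β hβ]
    refine (hΨmem _).2 ⟨((hΨmem β).1 hβ).2, ?_⟩
    rw [hσneg, hσσ, neg_neg]
    exact ((hΨmem β).1 hβ).1
  have hφnΨ : ∀ β ∈ C.Pos, β ∉ Ψ → φ β ∉ Ψ := by
    intro β hβ hβΨ hcon
    rw [hφval_nmem β hβ hβΨ] at hcon
    have := ((hΨmem _).1 hcon).2
    rw [hσσ] at this
    exact (C.aux_pos_iff (C.pos_subset hβ)).1 hβ this
  have hφφ : ∀ β ∈ C.Pos, φ (φ β) = β := by
    intro β hβ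
    by_cases hβΨ : β ∈ Ψ
    · rw [hφval_mem β hβΨ, hφval_mem _ (by rw [← hφval_mem β hβΨ]; exact hφΨ β hβΨ)]
      rw [hσneg, hσσ, neg_neg]
    · rw [hφval_nmem β hβ hβΨ,
        hφval_nmem _ (by rw [← hφval_nmem β hβ hβΨ]; exact hφPos β hβ)
          (by rw [← hφval_nmem β hβ hβΨ]; exact hφnΨ β hβ hβΨ)]
      exact hσσ β
  set Iw : Finset (Dual ℝ V) := C.invSet w with hIw
  set T : Finset (Dual ℝ V) := (Iw \ Ψ) ∪ (Ψ \ Iw) with hT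
  have hmemws : ∀ β, β ∈ C.invSet (w * s) ↔ β ∈ C.Pos ∧ -(dAct w (σ β)) ∈ C.Pos := by
    intro β
    rw [C.mem_invSet]
    have e : dAct (w * s) β = dAct w (σ β) := by rw [← hdA]; rfl
    rw [e]
  have hsub : ∀ (γ : Dual ℝ V) (c : ℝ), dAct w (γ - c • α) = dAct w γ - c • dAct w α :=
    fun γ c => rfl
  have hdneg : ∀ γ, dAct w (-γ) = -(dAct w γ) := fun γ => rfl
  have hcard : (C.invSet (w * s)).card = T.card := by
    refine Finset.card_nbij' φ φ ?_ ?_ ?_ ?_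
    · intro β hβ
      obtain ⟨hβP, hwσ⟩ := (hmemws β).1 hβ
      by_cases hβΨ : β ∈ Ψ
      · refine Finset.mem_union_right _ (Finset.mem_sdiff.2 ⟨hφΨ β hβΨ, ?_⟩)
        intro hcon
        have hφβP : φ β ∈ C.Pos := hφPos β hβP
        have hwφpos : dAct w (φ β) ∈ C.Pos := by
          rw [hφval_mem β hβΨ, hdneg]
          exact hwσ
        have := (htri _ (C.pos_subset hφβP)).1 hwφpos
        exact this ((C.mem_invSet.1 hcon).2)
      · refine Finset.mem_union_left _ (Finset.mem_sdiff.2 ⟨?_, hφnΨ β hβP hβΨ⟩)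
        rw [hIw, C.mem_invSet, hφval_nmem β hβP hβΨ]
        exact ⟨hsign β hβP hβΨ, hwσ⟩
    · intro β hβ
      rcases Finset.mem_union.1 hβ with hβ | hβ
      · obtain ⟨hβI, hβΨ⟩ := Finset.mem_sdiff.1 hβ
        obtain ⟨hβP, hwβ⟩ := C.mem_invSet.1 hβI
        refine (hmemws _).2 ⟨hφPos β hβP, ?_⟩
        rw [hφval_nmem β hβP hβΨ, hσσ]
        exact hwβ
      · obtain ⟨hβΨ, hβI⟩ := Finset.mem_sdiff.1 hβ
        have hβP : β ∈ C.Pos := ((hΨmem β).1 hβΨ).1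
        refine (hmemws _).2 ⟨hφPos β hβP, ?_⟩
        rw [hφval_mem β hβΨ, hσneg, hσσ, hdneg, neg_neg]
        exact (htri β (C.pos_subset hβP)).2
          (fun h => hβI (C.mem_invSet.2 ⟨hβP, h⟩))
    · intro β hβ
      exact hφφ β ((hmemws β).1 hβ).1
    · intro β hβ
      rcases Finset.mem_union.1 hβ with hβ | hβ
      · exact hφφ β (C.mem_invSet.1 (Finset.mem_sdiff.1 hβ).1).1
      · exact hφφ β ((hΨmem β).1 (Finset.mem_sdiff.1 hβ).1).1
  have hTcard : T.card = (Iw \ Ψ).card + (Ψ \ Iw).card := by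
    rw [hT]
    refine Finset.card_union_of_disjoint (Finset.disjoint_left.2 ?_)
    intro a ha hb
    exact (Finset.mem_sdiff.1 ha).2 (Finset.mem_sdiff.1 hb).1
  have hJI : (Ψ \ Iw).card < (Iw ∩ Ψ).card := by
    have hφα : φ α = α := by rw [hφval_mem α hαΨ, hσα, neg_neg]
    have hle : (Ψ \ Iw).card ≤ ((Iw ∩ Ψ).erase α).card := by
      refine Finset.card_le_card_of_injOn φ ?_ ?_
      · intro β hβ
        obtain ⟨hβΨ, hβnI⟩ := Finset.mem_sdiff.1 hβ
        have hβP : β ∈ C.Pos := ((hΨmem β).1 hβΨ).1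
        have hwβpos : dAct w β ∈ C.Pos :=
          (htri β (C.pos_subset hβP)).2 (fun h => hβnI (C.mem_invSet.2 ⟨hβP, h⟩))
        have hφβΨ := hφΨ β hβΨ
        have hφβP : φ β ∈ C.Pos := ((hΨmem _).1 hφβΨ).1
        have hc := hcpos β hβΨ
        have hwφ : -(dAct w (φ β)) ∈ C.Pos := by
          by_contra hcon
          have hwφpos : dAct w (φ β) ∈ C.Pos := (htri _ (C.pos_subset hφβP)).2 hcon
          have hzero : (1:ℝ) • dAct w β + (1:ℝ) • dAct w (φ β)
              + (β (C.coroot α)) • (-(dAct w α)) = 0 := by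
            rw [hφval_mem β hβΨ, hdneg, hσ]
            rw [hsub]
            module
          have hz := C.aux_triple_zero hwβpos hwφpos hneg (by norm_num) (by norm_num)
            (le_of_lt hc) hzero
          rw [one_smul] at hz
          exact hwne β (C.pos_subset hβP) hz
        have hφβI : φ β ∈ Iw := C.mem_invSet.2 ⟨hφβP, hwφ⟩
        refine Finset.mem_erase.2 ⟨?_, Finset.mem_inter.2 ⟨hφβI, hφβΨ⟩⟩
        intro hcon
        apply hβnI
        have : β = α := by rw [← hφφ β hβP, hcon, hφα]
        rw [this]
        exact hαI
      · intro a ha b hb hab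
        have haP : a ∈ C.Pos := ((hΨmem a).1 (Finset.mem_sdiff.1 ha).1).1
        have hbP : b ∈ C.Pos := ((hΨmem b).1 (Finset.mem_sdiff.1 hb).1).1
        rw [← hφφ a haP, hab, hφφ b hbP]
    calc (Ψ \ Iw).card ≤ ((Iw ∩ Ψ).erase α).card := hle
      _ < (Iw ∩ Ψ).card :=
        Finset.card_erase_lt_of_mem (Finset.mem_inter.2 ⟨hαI, hαΨ⟩)
  have hlw : (Iw \ Ψ).card + (Iw ∩ Ψ).card = C.len w :=
    Finset.card_sdiff_add_card_inter Iw Ψ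
  have hlws : C.len (w * s) = (Iw \ Ψ).card + (Ψ \ Iw).card := by
    rw [len, hcard, hTcard]
  omega

end AuxLemmas

end RootSystemCtx

/-- If `μ` is a dominant integral coweight and `w` is a minimal coset
representative for `μ`, then for every `α ∈ Φ⁺` and every `v` in the fundamental
alcove `A` one has `⟨α, μ⟩ + ⟨w(α), v⟩ > 0`; equivalently, for every `α ∈ Φ⁺`, either
`⟨α, μ⟩ ≥ 1`, or `⟨α, μ⟩ = 0` and `w(α) ∈ Φ⁺`.  (This expresses that `t_{−w(μ)}w` is
the minimal-length element of the coset `t_{−w(μ)}W₀`.) -/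
theorem minimal_length_criterion
    {V : Type*} [AddCommGroup V] [Module ℝ V] [FiniteDimensional ℝ V]
    (C : RootSystemCtx V) (μ : V)
    (hint : C.IsIntegral μ) (hdom : C.IsDominant μ)
    (w : V ≃ₗ[ℝ] V) (hmin : C.IsMinRep w μ) :
    (∀ α ∈ C.Pos, ∀ v ∈ C.alcove, 0 < α μ + dAct w α v) ∧
    (∀ α ∈ C.Pos, 1 ≤ α μ ∨ (α μ = 0 ∧ dAct w α ∈ C.Pos)) := by
  classical
  obtain ⟨hwW, hmin2⟩ := hmin
  have part2 : ∀ α ∈ C.Pos, 1 ≤ α μ ∨ (α μ = 0 ∧ dAct w α ∈ C.Pos) := by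
    intro α hα
    have hαΦ : α ∈ C.Φ := C.pos_subset hα
    obtain ⟨n, hn⟩ := hint α hαΦ
    have hn0 : 0 ≤ α μ := hdom α hα
    by_cases hz : α μ = 0
    · right
      refine ⟨hz, ?_⟩
      by_contra hneg'
      have hwαΦ : dAct w α ∈ C.Φ := C.dAct_mem_Phi hwW hαΦ
      have hneg : -(dAct w α) ∈ C.Pos := by
        rcases C.pos_partition _ hwαΦ with h | h
        · exact absurd h.1 hneg'
        · exact h.1
      have h2 := C.coroot_self α hαΦ
      have hsW := C.sRefl_mem_W hαΦ h2
      have hfix : (C.sRefl α h2) μ = μ := by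
        rw [C.sRefl_apply, hz, zero_smul, sub_zero]
      exact absurd (hmin2 _ hsW hfix)
        (not_le.2 (C.len_mul_sRefl_lt hwW hα h2 hneg))
    · left
      have h0 : (0:ℝ) ≤ (n:ℝ) := by rw [← hn]; exact hn0
      have h1 : (n:ℝ) ≠ 0 := by rw [← hn]; exact hz
      have hn1 : 1 ≤ n := by
        have e0 : 0 ≤ n := by exact_mod_cast h0
        have e1 : n ≠ 0 := by exact_mod_cast h1
        omega
      rw [hn]
      exact_mod_cast hn1
  refine ⟨?_, part2⟩
  intro α hα v hv
  have hwαΦ : dAct w α ∈ C.Φ := C.dAct_mem_Phi hwW (C.pos_subset hα)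
  have hbound : -1 < dAct w α v := by
    rcases C.pos_partition _ hwαΦ with h | h
    · have := (hv _ h.1).1
      linarith
    · have h1 := (hv _ h.1).2
      have e : (-(dAct w α)) v = -(dAct w α v) := rfl
      rw [e] at h1
      linarith
  rcases part2 α hα with h1 | ⟨h0, hpos⟩
  · linarith
  · have := (hv _ hpos).1
    linarith
end

section
/- Let μ be a dominant integral coweight and let w ∈ W₀ be a minimal coset representative for μ, and set x_w := t_{−w(μ)}w (the affine map v ↦ w(v) − w(μ)). Then ℓ(x_w) ≤ ℓ(t_{−w(μ)}u) for every u ∈ W₀, and ℓ(x_w) = ℓ(t_{−μ}) − ℓ(w), where moreover ℓ(t_{−μ}) = Σ_{α∈Φ⁺}⟨α, μ⟩ = ⟨2ρ, μ⟩; in particular ℓ(x_w) = ⟨2ρ, μ⟩ − ℓ(w). -/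
/-!
Common framework: a finite crystallographic reduced root system `Φ` inside the dual
of a finite-dimensional real vector space `V`, with a choice of positive roots `Pos`,
simple roots `Delta`, coroots, and the finite Weyl group `W` (a subgroup of linear
automorphisms of `V` generated by the root reflections).  We also set up affine
hyperplanes, the fundamental alcove, separation counts, and alcove walks.
-/

open Module Finset

section Aux

open Module RootSystemCtx

variable {V : Type*} [AddCommGroup V] [Module ℝ V] [FiniteDimensional ℝ V]
  (C : RootSystemCtx V)

/-- Pullback action on duals: `adC w α = α ∘ w`. -/
def adC (w : V ≃ₗ[ℝ] V) (α : Dual ℝ V) : Dual ℝ V := α.comp w.toLinearMap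

@[simp] lemma adC_apply (w : V ≃ₗ[ℝ] V) (α : Dual ℝ V) (v : V) :
    adC w α v = α (w v) := rfl

lemma adC_mul (w u : V ≃ₗ[ℝ] V) (α : Dual ℝ V) :
    adC (w * u) α = adC u (adC w α) := rfl

lemma adC_one (α : Dual ℝ V) : adC (1 : V ≃ₗ[ℝ] V) α = α := rfl

lemma adC_smul (w : V ≃ₗ[ℝ] V) (c : ℝ) (α : Dual ℝ V) :
    adC w (c • α) = c • adC w α := rfl

lemma adC_add (w : V ≃ₗ[ℝ] V) (α β : Dual ℝ V) :
    adC w (α + β) = adC w α + adC w β := rfl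

lemma adC_neg (w : V ≃ₗ[ℝ] V) (α : Dual ℝ V) : adC w (-α) = -adC w α := rfl

lemma adC_inj (w : V ≃ₗ[ℝ] V) {α β : Dual ℝ V} (h : adC w α = adC w β) : α = β := by
  ext v
  have := congrArg (fun f : Dual ℝ V => f (w.symm v)) h
  simpa using this

lemma neg_root_mem {α : Dual ℝ V} (hα : α ∈ C.Φ) : -α ∈ C.Φ := by
  have h := C.root_reflect_mem α hα α hα
  rw [C.coroot_self α hα] at h
  have : α - (2 : ℝ) • α = -α := by module
  rwa [this] at h

lemma adC_root_mem {w : V ≃ₗ[ℝ] V} (hw : w ∈ C.W) :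
    ∀ α ∈ C.Φ, adC w α ∈ C.Φ := by
  rw [C.W_gen] at hw
  have key : (∀ α ∈ C.Φ, adC w α ∈ C.Φ) ∧ (∀ α ∈ C.Φ, adC w.symm α ∈ C.Φ) := by
    induction hw using Subgroup.closure_induction with
    | mem g hg =>
      obtain ⟨α, hα, hgα⟩ := hg
      have hgg : ∀ v, g (g v) = v := by
        intro v
        rw [hgα, hgα]
        have h2 : α (C.coroot α) = 2 := C.coroot_self α hα
        simp only [map_sub, map_smul, h2, smul_eq_mul]
        module
      have hsymm : g.symm = g := by
        ext v
        rw [LinearEquiv.symm_apply_eq, hgg]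
      have hone : ∀ β ∈ C.Φ, adC g β ∈ C.Φ := by
        intro β hβ
        have : adC g β = β - β (C.coroot α) • α := by
          ext v; simp [hgα v, map_sub, map_smul, mul_comm]
        rw [this]
        exact C.root_reflect_mem α hα β hβ
      exact ⟨hone, by rw [hsymm]; exact hone⟩
    | one => exact ⟨fun α hα => hα, fun α hα => hα⟩
    | mul x y hx hy ihx ihy =>
      refine ⟨fun α hα => ?_, fun α hα => ?_⟩
      · rw [adC_mul]; exact ihy.1 _ (ihx.1 _ hα)
      · have : (x * y).symm = y.symm * x.symm := rfl
        rw [this, adC_mul]; exact ihx.2 _ (ihy.2 _ hα)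
    | inv x hx ihx =>
      refine ⟨fun α hα => ihx.2 _ hα, fun α hα => ?_⟩
      have : (x⁻¹ : V ≃ₗ[ℝ] V).symm = x := rfl
      rw [this]; exact ihx.1 _ hα
  exact key.1

end Aux

section Aux2
set_option linter.unusedSectionVars false

open Module RootSystemCtx

variable {V : Type*} [AddCommGroup V] [Module ℝ V] [FiniteDimensional ℝ V]
  (C : RootSystemCtx V)

open Classical in
/-- Sum of the (chosen) simple-root coordinates of a positive root. -/
noncomputable def heightC (α : Dual ℝ V) : ℕ :=
  if h : α ∈ C.Pos then ∑ β ∈ C.Delta, Classical.choose (C.pos_of_delta α h) β else 0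

lemma alcove_nonempty : ∃ v, v ∈ C.alcove := by
  classical
  have hli : LinearIndepOn ℝ id (C.Delta : Set (Dual ℝ V)) :=
    C.delta_indep
  set N : ℕ := C.Pos.sup (heightC C) + 1 with hN
  set ε : ℝ := (N : ℝ)⁻¹ with hε
  have hNpos : (0 : ℝ) < N := by positivity
  have hεpos : 0 < ε := by positivity
  let b := Basis.extend hli
  let φ : Dual ℝ (Dual ℝ V) :=
    b.constr ℝ (fun i => if (i : Dual ℝ V) ∈ C.Delta then ε else 0)
  have hφ : ∀ β ∈ C.Delta, φ β = ε := by
    intro β hβ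
    have hmem : β ∈ hli.extend (Set.subset_univ _) :=
      hli.subset_extend _ (by simpa using hβ)
    have : φ (b ⟨β, hmem⟩) = if (β : Dual ℝ V) ∈ C.Delta then ε else 0 :=
      Basis.constr_basis b ℝ _ _
    rw [Basis.extend_apply_self] at this
    rw [this, if_pos hβ]
  refine ⟨(evalEquiv ℝ V).symm φ, ?_⟩
  intro α hα
  have hov : α ((evalEquiv ℝ V).symm φ) = φ α :=
    Module.apply_evalEquiv_symm_apply ℝ V α φ
  set c := Classical.choose (C.pos_of_delta α hα) with hc
  have hrep : α = ∑ β ∈ C.Delta, (c β : ℝ) • β := Classical.choose_spec (C.pos_of_delta α hα)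
  have hheight : heightC C α = ∑ β ∈ C.Delta, c β := by
    rw [heightC, dif_pos hα]
  have hsum : ∀ β ∈ C.Delta, φ ((c β : ℝ) • β) = (c β : ℝ) * ε := by
    intro β hβ
    rw [map_smul, hφ β hβ, smul_eq_mul]
  have hval : φ α = (heightC C α : ℝ) * ε := by
    conv_lhs => rw [hrep]
    rw [map_sum, Finset.sum_congr rfl hsum, hheight]
    push_cast
    rw [Finset.sum_mul]
  have hne : heightC C α ≠ 0 := by
    intro h0
    rw [hheight, Finset.sum_eq_zero_iff] at h0
    have : α = 0 := by
      rw [hrep]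
      refine Finset.sum_eq_zero fun β hβ => ?_
      simp [h0 β hβ]
    exact C.root_ne_zero α (C.pos_subset hα) this
  have h1 : (1 : ℝ) ≤ (heightC C α : ℝ) := by
    exact_mod_cast Nat.one_le_iff_ne_zero.2 hne
  have hlt : (heightC C α : ℝ) < (N : ℝ) := by
    have h := Finset.le_sup (f := heightC C) hα
    have : heightC C α < N := by omega
    exact_mod_cast this
  constructor
  · rw [hov, hval]
    have : (0:ℝ) < (heightC C α : ℝ) := lt_of_lt_of_le one_pos h1
    positivity
  · rw [hov, hval]
    calc (heightC C α : ℝ) * ε < (N : ℝ) * ε := by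
          apply mul_lt_mul_of_pos_right hlt hεpos
    _ = 1 := by rw [hε]; exact mul_inv_cancel₀ (ne_of_gt hNpos)

end Aux2

section Aux3
set_option linter.unusedSectionVars false
set_option maxHeartbeats 800000

open Module RootSystemCtx

variable {V : Type*} [AddCommGroup V] [Module ℝ V] [FiniteDimensional ℝ V]
  (C : RootSystemCtx V)

lemma not_pos_neg_mem {β : Dual ℝ V} (hβ : β ∈ C.Φ) (hnb : β ∉ C.Pos) :
    -β ∈ C.Pos := by
  rcases C.pos_partition β hβ with h | h
  · exact absurd h.1 hnb
  · exact h.1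

lemma pos_iff_val {v₀ : V} (hv₀ : v₀ ∈ C.alcove) {β : Dual ℝ V} (hβ : β ∈ C.Φ) :
    β ∈ C.Pos ↔ 0 < β v₀ := by
  constructor
  · exact fun h => (hv₀ β h).1
  · intro h
    by_contra hnb
    have := (hv₀ _ (not_pos_neg_mem C hβ hnb)).1
    simp only [LinearMap.neg_apply] at this
    linarith

open Classical in
/-- The lower endpoint of the interval of values of a positive root `α` on
`affT (-lam) u '' alcove`. -/
noncomputable def aIC (u : V ≃ₗ[ℝ] V) (lam : V) (α : Dual ℝ V) : ℤ :=
  if adC u α ∈ C.Pos then -⌊α lam⌋ else -1 - ⌊α lam⌋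

lemma affLen_formula {v₀ : V} (hv₀ : v₀ ∈ C.alcove) (u : V ≃ₗ[ℝ] V)
    (hu : ∀ α ∈ C.Φ, adC u α ∈ C.Φ) (lam : V)
    (hlam : ∀ α ∈ C.Φ, ∃ n : ℤ, α lam = (n : ℝ)) :
    (C.affLen (affT (-lam) u) : ℤ) = ∑ α ∈ C.Pos, |aIC C u lam α| := by
  classical
  have hint' : ∀ α ∈ C.Φ, α lam = (⌊α lam⌋ : ℝ) := by
    intro α hα
    obtain ⟨n, hn⟩ := hlam α hα
    rw [hn, Int.floor_intCast]
  have hval : ∀ (α : Dual ℝ V) (v : V), α (affT (-lam) u v) = (adC u α) v - α lam := by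
    intro α v
    simp [affT, adC, map_add, map_neg, sub_eq_add_neg]
  have himg : ∀ α ∈ C.Pos, ∀ v ∈ C.alcove,
      (aIC C u lam α : ℝ) < α (affT (-lam) u v) ∧
        α (affT (-lam) u v) < aIC C u lam α + 1 := by
    intro α hα v hv
    have hαΦ := C.pos_subset hα
    rw [hval, hint' α hαΦ]
    by_cases hb : adC u α ∈ C.Pos
    · have h01 := hv _ hb
      rw [aIC, if_pos hb]
      push_cast
      constructor <;> linarith [h01.1, h01.2]
    · have h01 := hv _ (not_pos_neg_mem C (hu α hαΦ) hb)
      simp only [LinearMap.neg_apply] at h01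
      rw [aIC, if_neg hb]
      push_cast
      constructor <;> linarith [h01.1, h01.2]
  set x := affT (-lam) u with hx
  have hxmem : x v₀ ∈ x '' C.alcove := Set.mem_image_of_mem _ hv₀
  have hsep : ∀ α ∈ C.Pos, ∀ n : ℤ,
      SepBy α n C.alcove (x '' C.alcove) ↔
        ((1 ≤ n ∧ n ≤ aIC C u lam α) ∨ (aIC C u lam α + 1 ≤ n ∧ n ≤ 0)) := by
    intro α hα n
    set a := aIC C u lam α with ha
    have hA := hv₀ α hα
    have hI := himg α hα v₀ hv₀
    constructor
    · rintro (⟨h1, h2⟩ | ⟨h1, h2⟩)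
      · left
        have e1 : α v₀ < (n : ℝ) := h1 v₀ hv₀
        have e2 : (n : ℝ) < α (x v₀) := h2 _ hxmem
        have c1 : (0 : ℝ) < (n : ℝ) := lt_trans hA.1 e1
        have c2 : (n : ℝ) < (a : ℝ) + 1 := lt_trans e2 hI.2
        constructor
        · exact_mod_cast c1
        · have h3 : (n : ℝ) < ((a + 1 : ℤ) : ℝ) := by push_cast; linarith
          have : n < a + 1 := by exact_mod_cast h3
          omega
      · right
        have e1 : (n : ℝ) < α v₀ := h1 v₀ hv₀
        have e2 : α (x v₀) < (n : ℝ) := h2 _ hxmem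
        have c1 : (n : ℝ) < 1 := lt_trans e1 hA.2
        have c2 : (a : ℝ) < (n : ℝ) := lt_trans hI.1 e2
        constructor
        · have : a < n := by exact_mod_cast c2
          omega
        · have : (n:ℝ) < ((1:ℤ):ℝ) := by push_cast; linarith
          have : n < 1 := by exact_mod_cast this
          omega
    · rintro (⟨h1, h2⟩ | ⟨h1, h2⟩)
      · refine Or.inl ⟨fun v hv => ?_, ?_⟩
        · have : (1 : ℝ) ≤ (n : ℝ) := by exact_mod_cast h1
          linarith [(hv α hα).2]
        · rintro v' ⟨v, hv, rfl⟩
          have : (n : ℝ) ≤ (a : ℝ) := by exact_mod_cast h2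
          linarith [(himg α hα v hv).1]
      · refine Or.inr ⟨fun v hv => ?_, ?_⟩
        · have : (n : ℝ) ≤ 0 := by exact_mod_cast h2
          linarith [(hv α hα).1]
        · rintro v' ⟨v, hv, rfl⟩
          have : ((a + 1 : ℤ) : ℝ) ≤ (n : ℝ) := by exact_mod_cast h1
          push_cast at this
          linarith [(himg α hα v hv).2]
  set T : Finset (Dual ℝ V × ℤ) := C.Pos.biUnion (fun α =>
    (Finset.Icc 1 (aIC C u lam α) ∪ Finset.Icc (aIC C u lam α + 1) 0).image
      (fun n => (α, n))) with hT
  have hset : {p : Dual ℝ V × ℤ | p.1 ∈ C.Pos ∧ SepBy p.1 p.2 C.alcove (x '' C.alcove)}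
      = ↑T := by
    ext ⟨α, n⟩
    simp only [Set.mem_setOf_eq, Finset.coe_biUnion, Set.mem_iUnion, Finset.mem_coe,
      Finset.mem_image, Finset.mem_union, Finset.mem_Icc, hT, Finset.mem_biUnion]
    constructor
    · rintro ⟨hα, hsb⟩
      rcases (hsep α hα n).1 hsb with h | h
      · exact ⟨α, hα, n, Or.inl h, rfl⟩
      · exact ⟨α, hα, n, Or.inr h, rfl⟩
    · rintro ⟨β, hβ, m, hm, heq⟩
      obtain ⟨rfl, rfl⟩ : β = α ∧ m = n := by
        constructor <;> [exact congrArg Prod.fst heq; exact congrArg Prod.snd heq]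
      refine ⟨hβ, (hsep β hβ m).2 ?_⟩
      rcases hm with h | h
      · exact Or.inl ⟨h.1, h.2⟩
      · exact Or.inr ⟨h.1, h.2⟩
  have hlen : C.affLen x = T.card := by
    rw [affLen, sepCount, hset, Set.ncard_coe_finset]
  rw [hlen]
  have hdisj : ∀ α ∈ C.Pos, ∀ β ∈ C.Pos, α ≠ β →
      Disjoint ((Finset.Icc 1 (aIC C u lam α) ∪ Finset.Icc (aIC C u lam α + 1) 0).image
        (fun n => (α, n)))
        ((Finset.Icc 1 (aIC C u lam β) ∪ Finset.Icc (aIC C u lam β + 1) 0).image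
        (fun n => (β, n))) := by
    intro α _ β _ hne
    rw [Finset.disjoint_left]
    rintro ⟨γ, m⟩ hmem hmem'
    obtain ⟨n1, _, h1⟩ := Finset.mem_image.1 hmem
    obtain ⟨n2, _, h2⟩ := Finset.mem_image.1 hmem'
    have e1 : α = γ := congrArg Prod.fst h1
    have e2 : β = γ := congrArg Prod.fst h2
    exact hne (e1.trans e2.symm)
  clear_value T
  subst hT
  rw [Finset.card_biUnion hdisj]
  push_cast
  refine Finset.sum_congr rfl fun α hα => ?_
  rw [Finset.card_image_of_injective _ (Prod.mk_right_injective α)]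
  have hd2 : Disjoint (Finset.Icc 1 (aIC C u lam α)) (Finset.Icc (aIC C u lam α + 1) 0) := by
    rw [Finset.disjoint_left]
    intro m hm hm'
    have h1 := Finset.mem_Icc.1 hm
    have h2 := Finset.mem_Icc.1 hm'
    omega
  rw [Finset.card_union_of_disjoint hd2, Int.card_Icc, Int.card_Icc]
  rcases le_or_gt 0 (aIC C u lam α) with h | h
  · rw [abs_of_nonneg h]; omega
  · rw [abs_of_neg h]; omega

end Aux3

section Aux4
set_option linter.unusedSectionVars false
set_option maxHeartbeats 1200000

open Module RootSystemCtx

variable {V : Type*} [AddCommGroup V] [Module ℝ V] [FiniteDimensional ℝ V]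
  (C : RootSystemCtx V)

lemma exists_refl {γ : Dual ℝ V} (hγ : γ ∈ C.Φ) :
    ∃ s : V ≃ₗ[ℝ] V, (∀ v, s v = v - γ v • C.coroot γ) ∧ s ∈ C.W ∧ s.symm = s := by
  have h2 := C.coroot_self γ hγ
  let f : V →ₗ[ℝ] V := LinearMap.id - (LinearMap.toSpanSingleton ℝ V (C.coroot γ)).comp γ
  have hfv : ∀ v, f v = v - γ v • C.coroot γ := fun v => rfl
  have hff : f.comp f = LinearMap.id := by
    apply LinearMap.ext
    intro v
    simp only [LinearMap.comp_apply, LinearMap.id_apply, hfv, map_sub, map_smul, h2,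
      smul_eq_mul]
    module
  refine ⟨LinearEquiv.ofLinear f f hff hff, fun v => rfl, ?_, ?_⟩
  · rw [C.W_gen]
    exact Subgroup.subset_closure ⟨γ, hγ, fun v => rfl⟩
  · rfl

lemma dAct_eq_adC (w : V ≃ₗ[ℝ] V) (α : Dual ℝ V) : dAct w α = adC w.symm α := rfl

lemma dAct_neg (w : V ≃ₗ[ℝ] V) (α : Dual ℝ V) : dAct w (-α) = -dAct w α := rfl

lemma dAct_root_mem {w : V ≃ₗ[ℝ] V} (hw : w ∈ C.W) {α : Dual ℝ V} (hα : α ∈ C.Φ) :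
    dAct w α ∈ C.Φ := adC_root_mem C (inv_mem hw) α hα

lemma pos_not_neg {β : Dual ℝ V} (hβ : β ∈ C.Pos) : -β ∉ C.Pos := by
  rcases C.pos_partition β (C.pos_subset hβ) with h | h
  · exact h.2
  · exact absurd hβ h.2

lemma len_mul_refl_lt {v₀ : V} (hv₀ : v₀ ∈ C.alcove) {w : V ≃ₗ[ℝ] V} (hw : w ∈ C.W)
    {γ : Dual ℝ V} (hγI : γ ∈ C.invSet w) {s : V ≃ₗ[ℝ] V}
    (hs : ∀ v, s v = v - γ v • C.coroot γ) (hsW : s ∈ C.W) (hss : s.symm = s) :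
    C.len (w * s) < C.len w := by
  classical
  have hγP : γ ∈ C.Pos := (Finset.mem_filter.1 hγI).1
  have hγw : -(dAct w γ) ∈ C.Pos := (Finset.mem_filter.1 hγI).2
  have hγΦ : γ ∈ C.Φ := C.pos_subset hγP
  have hds : ∀ α : Dual ℝ V, adC s α = α - α (C.coroot γ) • γ := by
    intro α; ext v
    simp [adC, hs v, map_sub, map_smul, mul_comm]
  have hdss : ∀ α : Dual ℝ V, adC s (adC s α) = α := by
    intro α
    rw [hds, hds]
    have h2 : γ (C.coroot γ) = 2 := C.coroot_self γ hγΦ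
    ext v
    simp only [LinearMap.sub_apply, LinearMap.smul_apply, map_sub, map_smul, h2,
      smul_eq_mul]
    ring
  have hdsγ : adC s γ = -γ := by
    rw [hds, C.coroot_self γ hγΦ]
    module
  have hdsΦ : ∀ {α : Dual ℝ V}, α ∈ C.Φ → adC s α ∈ C.Φ := fun hα =>
    adC_root_mem C hsW _ hα
  have hdwΦ : ∀ {α : Dual ℝ V}, α ∈ C.Φ → dAct w α ∈ C.Φ := fun hα =>
    dAct_root_mem C hw hα
  have hdws : ∀ α : Dual ℝ V, dAct (w * s) α = dAct w (adC s α) := by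
    intro α
    rw [dAct_eq_adC, dAct_eq_adC]
    have : (w * s).symm = s.symm * w.symm := rfl
    rw [this, adC_mul, hss]
  have hsign : ∀ {β : Dual ℝ V}, β ∈ C.Φ → (β ∈ C.Pos ↔ 0 < β v₀) :=
    fun hβ => pos_iff_val C hv₀ hβ
  have hneg : ∀ {β : Dual ℝ V}, β ∈ C.Φ → β ∉ C.Pos → β v₀ < 0 := by
    intro β hβ hnβ
    have := (hsign (neg_root_mem C hβ)).1 (not_pos_neg_mem C hβ hnβ)
    simpa using this
  set I := C.invSet w with hI
  set Iws := C.invSet (w * s) with hIws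
  have hmemI : ∀ {β : Dual ℝ V}, β ∈ I ↔ β ∈ C.Pos ∧ -(dAct w β) ∈ C.Pos := by
    intro β; rw [hI, invSet, Finset.mem_filter]
  have hmemIws : ∀ {β : Dual ℝ V},
      β ∈ Iws ↔ β ∈ C.Pos ∧ -(dAct w (adC s β)) ∈ C.Pos := by
    intro β; rw [hIws, invSet, Finset.mem_filter, hdws]
  have hnotI : ∀ {β : Dual ℝ V}, β ∈ C.Pos → β ∉ I → dAct w β ∈ C.Pos := by
    intro β hβ hnI
    have hβΦ := C.pos_subset hβ
    rcases C.pos_partition _ (hdwΦ hβΦ) with h | h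
    · exact h.1
    · exact absurd (hmemI.2 ⟨hβ, h.1⟩) hnI
  have hinI : ∀ {β : Dual ℝ V}, β ∈ I → (dAct w β) v₀ < 0 := by
    intro β hβI
    have h := (hsign (neg_root_mem C (hdwΦ (C.pos_subset (hmemI.1 hβI).1)))).1
      (hmemI.1 hβI).2
    simpa using h
  have hsplit : ∀ J : Finset (Dual ℝ V),
      (J.filter fun α => adC s α ∈ C.Pos).card
        + (J.filter fun α => adC s α ∉ C.Pos).card = J.card := fun J =>
    Finset.card_filter_add_card_filter_not _
  have hcard1 : ((Iws.filter fun α => adC s α ∈ C.Pos).card)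
      = ((I.filter fun α => adC s α ∈ C.Pos).card) := by
    apply Finset.card_nbij' (fun α => adC s α) (fun β => adC s β)
    · intro α hα
      obtain ⟨hα1, hα2⟩ := Finset.mem_filter.1 hα
      obtain ⟨hαP, hαw⟩ := hmemIws.1 hα1
      refine Finset.mem_filter.2 ⟨hmemI.2 ⟨hα2, hαw⟩, ?_⟩
      rw [hdss]; exact hαP
    · intro β hβ
      obtain ⟨hβ1, hβ2⟩ := Finset.mem_filter.1 hβ
      obtain ⟨hβP, hβw⟩ := hmemI.1 hβ1
      refine Finset.mem_filter.2 ⟨hmemIws.2 ⟨hβ2, ?_⟩, ?_⟩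
      · rw [hdss]; exact hβw
      · rw [hdss]; exact hβP
    · intro α _; exact hdss α
    · intro β _; exact hdss β
  have hcard2 : ((Iws.filter fun α => adC s α ∉ C.Pos).card)
      = ((C.Pos.filter fun β => (adC s β ∉ C.Pos) ∧ β ∉ I).card) := by
    apply Finset.card_nbij' (fun α => -(adC s α)) (fun β => -(adC s β))
    · intro α hα
      obtain ⟨hα1, hα2⟩ := Finset.mem_filter.1 hα
      obtain ⟨hαP, hαw⟩ := hmemIws.1 hα1
      have hsαΦ : adC s α ∈ C.Φ := hdsΦ (C.pos_subset hαP)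
      refine Finset.mem_filter.2 ⟨not_pos_neg_mem C hsαΦ hα2, ?_, ?_⟩
      · have h : adC s (-(adC s α)) = -α := by rw [adC_neg, hdss]
        rw [h]
        exact pos_not_neg C hαP
      · intro hmem
        have h1 := (hmemI.1 hmem).2
        rw [dAct_neg, neg_neg] at h1
        exact pos_not_neg C h1 hαw
    · intro β hβ
      have hmem := Finset.mem_filter.1 hβ
      have hβP := hmem.1
      have hβs := hmem.2.1
      have hβI := hmem.2.2
      have hsβΦ : adC s β ∈ C.Φ := hdsΦ (C.pos_subset hβP)
      refine Finset.mem_filter.2 ⟨hmemIws.2 ⟨not_pos_neg_mem C hsβΦ hβs, ?_⟩, ?_⟩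
      · rw [adC_neg, hdss, dAct_neg, neg_neg]
        exact hnotI hβP hβI
      · rw [adC_neg, hdss]
        exact pos_not_neg C hβP
    · intro α _; beta_reduce; rw [adC_neg, hdss, neg_neg]
    · intro β _; beta_reduce; rw [adC_neg, hdss, neg_neg]
  set B3 := I.filter (fun α => adC s α ∉ C.Pos) with hB3
  have hγB3 : γ ∈ B3 := by
    refine Finset.mem_filter.2 ⟨hmemI.2 ⟨hγP, hγw⟩, ?_⟩
    rw [hdsγ]
    exact pos_not_neg C hγP
  have hinj : ((C.Pos.filter fun β => (adC s β ∉ C.Pos) ∧ β ∉ I).card)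
      ≤ (B3.erase γ).card := by
    apply Finset.card_le_card_of_injOn (fun β => -(adC s β))
    · intro β hβ
      have hmem := Finset.mem_filter.1 hβ
      have hβP := hmem.1
      have hβs := hmem.2.1
      have hβI := hmem.2.2
      have hβΦ := C.pos_subset hβP
      have hsβΦ : adC s β ∈ C.Φ := hdsΦ hβΦ
      have hδP : -(adC s β) ∈ C.Pos := not_pos_neg_mem C hsβΦ hβs
      have hγv : 0 < γ v₀ := (hsign hγΦ).1 hγP
      have hc : 0 < β (C.coroot γ) := by
        have h1 : 0 < β v₀ := (hsign hβΦ).1 hβP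
        have h2 : (adC s β) v₀ < 0 := hneg hsβΦ hβs
        have h3 : (adC s β) v₀ = β v₀ - β (C.coroot γ) * γ v₀ := by
          rw [hds]; simp [smul_eq_mul]
        by_contra hcon
        push_neg at hcon
        nlinarith
      have hδI : -(adC s β) ∈ I := by
        refine hmemI.2 ⟨hδP, ?_⟩
        have hdwδΦ : dAct w (-(adC s β)) ∈ C.Φ := hdwΦ (neg_root_mem C hsβΦ)
        have he : dAct w (-(adC s β)) = β (C.coroot γ) • dAct w γ - dAct w β := by
          have h0 : -(adC s β) = β (C.coroot γ) • γ - β := by rw [hds]; module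
          rw [h0]; rfl
        have h1 : (dAct w γ) v₀ < 0 := hinI hγI
        have h2 : 0 < (dAct w β) v₀ := (hsign (hdwΦ hβΦ)).1 (hnotI hβP hβI)
        have h3 : (dAct w (-(adC s β))) v₀ < 0 := by
          rw [he]
          simp only [LinearMap.sub_apply, LinearMap.smul_apply, smul_eq_mul]
          nlinarith
        have h4 : dAct w (-(adC s β)) ∉ C.Pos := fun hcon => by
          have := (hsign hdwδΦ).1 hcon; linarith
        exact not_pos_neg_mem C hdwδΦ h4
      refine Finset.mem_erase.2 ⟨?_, Finset.mem_filter.2 ⟨hδI, ?_⟩⟩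
      · intro heq
        have hbg : β = γ := by
          have h1 := congrArg (fun x => -(adC s x)) heq
          simp only [adC_neg, neg_neg, hdss, hdsγ] at h1
          exact h1
        rw [hbg] at hβI
        exact hβI hγI
      · rw [adC_neg, hdss]
        intro hcon
        exact pos_not_neg C hβP (by simpa using hcon)
    · intro β1 h1 β2 h2 heq
      simp only at heq
      have h := congrArg (fun x => adC s (-x)) heq
      simp only [adC_neg, neg_neg, hdss] at h
      exact h
  have hγcard : (B3.erase γ).card = B3.card - 1 := Finset.card_erase_of_mem hγB3
  have hB3pos : 1 ≤ B3.card := Finset.card_pos.2 ⟨γ, hγB3⟩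
  have e1 := hsplit Iws
  have e2 := hsplit I
  rw [len, len, ← e1, ← e2, hcard1, hcard2]
  have hfin := hinj
  rw [hγcard] at hfin
  have e3 : (Finset.filter (fun α => ¬ (adC s α ∈ C.Pos)) I).card = B3.card := by
    rw [hB3]
  have e4 : (Finset.filter (fun α => ¬ (adC s α ∈ C.Pos)) Iws).card
      = (Finset.filter (fun α => adC s α ∉ C.Pos) Iws).card := rfl
  omega

end Aux4

section Aux5
set_option linter.unusedSectionVars false
set_option maxHeartbeats 1200000

open Module RootSystemCtx

variable {V : Type*} [AddCommGroup V] [Module ℝ V] [FiniteDimensional ℝ V]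
  (C : RootSystemCtx V)

lemma adC_symm_adC (w : V ≃ₗ[ℝ] V) (α : Dual ℝ V) : adC w.symm (adC w α) = α := by
  ext v; simp [adC]

lemma adC_adC_symm (w : V ≃ₗ[ℝ] V) (α : Dual ℝ V) : adC w (adC w.symm α) = α := by
  ext v; simp [adC]

lemma minrep_inv_ne_zero {v₀ : V} (hv₀ : v₀ ∈ C.alcove) {μ : V} {w : V ≃ₗ[ℝ] V}
    (hmin : C.IsMinRep w μ) {γ : Dual ℝ V} (hγ : γ ∈ C.invSet w) : γ μ ≠ 0 := by
  classical
  intro h0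
  have hγP : γ ∈ C.Pos := (Finset.mem_filter.1 hγ).1
  obtain ⟨s, hs, hsW, hss⟩ := exists_refl C (C.pos_subset hγP)
  have hsμ : s μ = μ := by rw [hs, h0]; simp
  have hle := hmin.2 s hsW hsμ
  have hlt := len_mul_refl_lt C hv₀ hmin.1 hγ hs hsW hss
  omega

end Aux5
/-- Let `μ` be a dominant integral coweight, `w ∈ W₀` a minimal
coset representative for `μ`, and `x_w := t_{−w(μ)}w`.  Then `ℓ(x_w) ≤ ℓ(t_{−w(μ)}u)`
for every `u ∈ W₀`, and `ℓ(x_w) = ℓ(t_{−μ}) − ℓ(w)`, where moreover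
`ℓ(t_{−μ}) = Σ_{α ∈ Φ⁺} ⟨α, μ⟩ = ⟨2ρ, μ⟩`; in particular `ℓ(x_w) = ⟨2ρ, μ⟩ − ℓ(w)`. -/
theorem minimal_coset_affine_length
    {V : Type*} [AddCommGroup V] [Module ℝ V] [FiniteDimensional ℝ V]
    (C : RootSystemCtx V) (μ : V)
    (hint : C.IsIntegral μ) (hdom : C.IsDominant μ)
    (w : V ≃ₗ[ℝ] V) (hmin : C.IsMinRep w μ) :
    (∀ u ∈ C.W, C.affLen (affT (-(w μ)) w) ≤ C.affLen (affT (-(w μ)) u)) ∧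
    (C.affLen (affT (-(w μ)) w) : ℤ) = (C.affLen (affT (-μ) 1) : ℤ) - (C.len w : ℤ) ∧
    (C.affLen (affT (-μ) 1) : ℝ) = ∑ α ∈ C.Pos, α μ ∧
    (C.affLen (affT (-μ) 1) : ℝ) = 2 * C.rho μ ∧
    (C.affLen (affT (-(w μ)) w) : ℝ) = 2 * C.rho μ - (C.len w : ℝ) := by
  classical
  obtain ⟨v₀, hv₀⟩ := alcove_nonempty C
  have hwW : w ∈ C.W := hmin.1
  have hwΦ : ∀ α ∈ C.Φ, adC w α ∈ C.Φ := adC_root_mem C hwW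
  have h1Φ : ∀ α ∈ C.Φ, adC (1 : V ≃ₗ[ℝ] V) α ∈ C.Φ := fun α hα => hα
  have hwμint : ∀ α ∈ C.Φ, ∃ n : ℤ, α (w μ) = (n : ℝ) := fun α hα => hint _ (hwΦ α hα)
  have hkey : ∀ γ ∈ C.Pos, 0 ≤ ⌊γ μ⌋ := fun γ hγ => Int.floor_nonneg.2 (hdom γ hγ)
  have hk0 : ∀ α ∈ C.Pos, adC w α ∈ C.Pos → 0 ≤ ⌊α (w μ)⌋ := fun α hα h =>
    Int.floor_nonneg.2 (hdom _ h)
  have hIchar : ∀ α ∈ C.Pos, adC w α ∉ C.Pos → -(adC w α) ∈ C.invSet w := by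
    intro α hα h
    have hαΦ := C.pos_subset hα
    have hγP : -(adC w α) ∈ C.Pos := not_pos_neg_mem C (hwΦ α hαΦ) h
    refine Finset.mem_filter.2 ⟨hγP, ?_⟩
    have he : dAct w (-(adC w α)) = -α := by
      rw [dAct_neg, dAct_eq_adC, adC_symm_adC]
    rw [he, neg_neg]
    exact hα
  have hfloorneg : ∀ α ∈ C.Pos, ⌊(-(adC w α)) μ⌋ = -⌊α (w μ)⌋ := by
    intro α hα
    obtain ⟨n, hn⟩ := hwμint α (C.pos_subset hα)
    have h1 : (-(adC w α)) μ = ((-n : ℤ) : ℝ) := by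
      have h2 : (adC w α) μ = α (w μ) := rfl
      push_cast
      simp [h2, hn]
    rw [h1, Int.floor_intCast, show α (w μ) = ((n : ℤ) : ℝ) from hn, Int.floor_intCast]
  have hk1 : ∀ α ∈ C.Pos, adC w α ∉ C.Pos → ⌊α (w μ)⌋ ≤ -1 := by
    intro α hα h
    have hγI := hIchar α hα h
    have hγP : -(adC w α) ∈ C.Pos := (Finset.mem_filter.1 hγI).1
    have hne := minrep_inv_ne_zero C hv₀ hmin hγI
    have hge : 0 ≤ ⌊(-(adC w α)) μ⌋ := hkey _ hγP
    have hfl := hfloorneg α hα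
    have hne0 : ⌊(-(adC w α)) μ⌋ ≠ 0 := by
      intro h0
      apply hne
      obtain ⟨n, hn⟩ := hint _ (C.pos_subset hγP)
      rw [hn] at h0 ⊢
      rw [Int.floor_intCast] at h0
      exact_mod_cast h0
    omega
  have M2 := affLen_formula C hv₀ 1 h1Φ μ hint
  have hM2 : (C.affLen (affT (-μ) 1) : ℤ) = ∑ γ ∈ C.Pos, ⌊γ μ⌋ := by
    rw [M2]
    refine Finset.sum_congr rfl fun γ hγ => ?_
    rw [aIC, adC_one, if_pos hγ, abs_neg, abs_of_nonneg (hkey γ hγ)]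
  have M1 := affLen_formula C hv₀ w hwΦ (w μ) hwμint
  have hM1 : (C.affLen (affT (-(w μ)) w) : ℤ)
      = ∑ α ∈ C.Pos, (if adC w α ∈ C.Pos then ⌊α (w μ)⌋ else -⌊α (w μ)⌋ - 1) := by
    rw [M1]
    refine Finset.sum_congr rfl fun α hα => ?_
    by_cases h : adC w α ∈ C.Pos
    · rw [aIC, if_pos h, if_pos h, abs_neg, abs_of_nonneg (hk0 α hα h)]
    · have h1 := hk1 α hα h
      rw [aIC, if_neg h, if_neg h, abs_of_nonneg (by omega)]
      ring
  have hfilterI : C.Pos.filter (fun γ => γ ∈ C.invSet w) = C.invSet w := by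
    ext γ
    simp only [Finset.mem_filter]
    exact ⟨fun h => h.2, fun h => ⟨(Finset.mem_filter.1 h).1, h⟩⟩
  have hnotmemI : ∀ γ ∈ C.Pos, γ ∉ C.invSet w → dAct w γ ∈ C.Pos := by
    intro γ hγ h
    rcases C.pos_partition _ (dAct_root_mem C hwW (C.pos_subset hγ)) with hh | hh
    · exact hh.1
    · exfalso
      apply h
      refine Finset.mem_filter.2 ⟨hγ, ?_⟩
      exact hh.1
  have e1 : ∑ α ∈ C.Pos.filter (fun α => adC w α ∈ C.Pos), ⌊α (w μ)⌋
      = ∑ γ ∈ C.Pos.filter (fun γ => γ ∉ C.invSet w), ⌊γ μ⌋ := by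
    apply Finset.sum_nbij' (fun α => adC w α) (fun γ => adC w.symm γ)
    · intro α hα
      obtain ⟨hα1, hα2⟩ := Finset.mem_filter.1 hα
      refine Finset.mem_filter.2 ⟨hα2, ?_⟩
      intro hmem
      have h2 := (Finset.mem_filter.1 hmem).2
      rw [dAct_eq_adC, adC_symm_adC] at h2
      exact pos_not_neg C hα1 h2
    · intro γ hγ
      obtain ⟨hγ1, hγ2⟩ := Finset.mem_filter.1 hγ
      have h3 := hnotmemI γ hγ1 hγ2
      rw [dAct_eq_adC] at h3
      exact Finset.mem_filter.2 ⟨h3, by rw [adC_adC_symm]; exact hγ1⟩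
    · intro α _; exact adC_symm_adC w α
    · intro γ _; exact adC_adC_symm w γ
    · intro α _; rfl
  have e2 : ∑ α ∈ C.Pos.filter (fun α => adC w α ∉ C.Pos), (-⌊α (w μ)⌋ - 1)
      = ∑ γ ∈ C.invSet w, (⌊γ μ⌋ - 1) := by
    apply Finset.sum_nbij' (fun α => -(adC w α)) (fun γ => -(adC w.symm γ))
    · intro α hα
      obtain ⟨hα1, hα2⟩ := Finset.mem_filter.1 hα
      exact hIchar α hα1 hα2
    · intro γ hγ
      obtain ⟨hγ1, hγ2⟩ := Finset.mem_filter.1 hγ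
      rw [dAct_eq_adC] at hγ2
      refine Finset.mem_filter.2 ⟨hγ2, ?_⟩
      rw [adC_neg, adC_adC_symm]
      exact pos_not_neg C hγ1
    · intro α _; rw [adC_neg, adC_symm_adC, neg_neg]
    · intro γ _; rw [adC_neg, adC_adC_symm, neg_neg]
    · intro α hα
      have hα1 := (Finset.mem_filter.1 hα).1
      rw [hfloorneg α hα1]
  have hsum : (C.affLen (affT (-(w μ)) w) : ℤ)
      = (∑ γ ∈ C.Pos, ⌊γ μ⌋) - (C.len w : ℤ) := by
    rw [hM1, ← Finset.sum_filter_add_sum_filter_not C.Pos (fun α => adC w α ∈ C.Pos)]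
    have c1 : ∑ α ∈ C.Pos.filter (fun α => adC w α ∈ C.Pos),
        (if adC w α ∈ C.Pos then ⌊α (w μ)⌋ else -⌊α (w μ)⌋ - 1)
        = ∑ α ∈ C.Pos.filter (fun α => adC w α ∈ C.Pos), ⌊α (w μ)⌋ :=
      Finset.sum_congr rfl fun α hα => if_pos (Finset.mem_filter.1 hα).2
    have c2 : ∑ α ∈ C.Pos.filter (fun α => ¬(adC w α ∈ C.Pos)),
        (if adC w α ∈ C.Pos then ⌊α (w μ)⌋ else -⌊α (w μ)⌋ - 1)
        = ∑ α ∈ C.Pos.filter (fun α => adC w α ∉ C.Pos), (-⌊α (w μ)⌋ - 1) :=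
      Finset.sum_congr rfl fun α hα => if_neg (Finset.mem_filter.1 hα).2
    rw [c1, c2, e1, e2]
    have c3 : ∑ γ ∈ C.invSet w, (⌊γ μ⌋ - 1)
        = (∑ γ ∈ C.invSet w, ⌊γ μ⌋) - (C.len w : ℤ) := by
      rw [Finset.sum_sub_distrib, Finset.sum_const]
      simp [RootSystemCtx.len]
    have c4 := Finset.sum_filter_add_sum_filter_not C.Pos
      (fun γ => γ ∈ C.invSet w) (fun γ => ⌊γ μ⌋)
    rw [hfilterI] at c4
    rw [c3]
    linarith [c4]
  have hsumreal : (∑ γ ∈ C.Pos, (⌊γ μ⌋ : ℝ)) = ∑ γ ∈ C.Pos, γ μ := by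
    refine Finset.sum_congr rfl fun γ hγ => ?_
    obtain ⟨n, hn⟩ := hint γ (C.pos_subset hγ)
    rw [hn, Int.floor_intCast]
  have hrho : 2 * C.rho μ = ∑ γ ∈ C.Pos, γ μ := by
    rw [RootSystemCtx.rho]
    simp only [LinearMap.smul_apply, smul_eq_mul]
    rw [LinearMap.sum_apply]
    ring
  have part3 : (C.affLen (affT (-μ) 1) : ℝ) = ∑ γ ∈ C.Pos, γ μ := by
    have h := congrArg (fun z : ℤ => (z : ℝ)) hM2
    push_cast at h
    rw [h, hsumreal]
  refine ⟨?_, ?_, part3, ?_, ?_⟩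
  · intro u hu
    have M3 := affLen_formula C hv₀ u (adC_root_mem C hu) (w μ) hwμint
    have hb : ∀ α ∈ C.Pos,
        (if adC w α ∈ C.Pos then ⌊α (w μ)⌋ else -⌊α (w μ)⌋ - 1)
          ≤ |aIC C u (w μ) α| := by
      intro α hα
      by_cases h : adC w α ∈ C.Pos
      · rw [if_pos h]
        have h0 := hk0 α hα h
        rw [aIC]
        by_cases h2 : adC u α ∈ C.Pos
        · rw [if_pos h2, abs_neg, abs_of_nonneg h0]
        · rw [if_neg h2, abs_of_nonpos (by omega)]
          omega
      · rw [if_neg h]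
        have h1 := hk1 α hα h
        rw [aIC]
        by_cases h2 : adC u α ∈ C.Pos
        · rw [if_pos h2, abs_neg, abs_of_nonpos (by omega)]
          omega
        · rw [if_neg h2, abs_of_nonneg (by omega)]
          omega
    have hle : (C.affLen (affT (-(w μ)) w) : ℤ) ≤ (C.affLen (affT (-(w μ)) u) : ℤ) := by
      rw [hM1, M3]
      exact Finset.sum_le_sum hb
    exact_mod_cast hle
  · rw [hsum, hM2]
  · rw [part3, hrho]
  · have h := congrArg (fun z : ℤ => (z : ℝ)) hsum
    push_cast at h
    rw [h, hsumreal, hrho]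
end
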